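/- If the bunkbed inequality in model E₃^{T'} (each edge of G' colored red or blue independently with probability 1/2, where a walk may change color only at vertices of T'; equivalently exactly one of e₀, e₁ present in the bunkbed graph) holds for every minor G' of G and every T' ⊆ V(G'), then the bunkbed inequality in model E₂^{p,T} holds for G for every probability vector p and every T ⊆ V(G), and hence the bunkbed inequality in model E₁^p holds for G for every p ∈ [0,1]. -/

import Mathlib

open scoped Classical

noncomputable section

/-- Indicator of a proposition, as a real number. -/
def pInd (P : Prop) : ℝ := if P then 1 else 0

variable {V : Type}

/-- The bunkbed presence graph: `σ e b` tells whether the copy of edge `e` in layer `b`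
is present; vertical edges are present exactly at vertices of `T`. -/
def bbGraph (G : SimpleGraph V) (σ : Sym2 V → Bool → Bool) (T : Set V) :
    SimpleGraph (V × Bool) where
  Adj a b := (a.2 = b.2 ∧ G.Adj a.1 b.1 ∧ σ s(a.1, b.1) a.2 = true) ∨
    (a.1 = b.1 ∧ a.2 ≠ b.2 ∧ a.1 ∈ T)
  symm := by
    constructor
    intro a b h
    rcases h with ⟨h1, h2, h3⟩ | ⟨h1, h2, h3⟩
    · exact Or.inl ⟨h1.symm, h2.symm, by rwa [Sym2.eq_swap, ← h1]⟩
    · exact Or.inr ⟨h1.symm, Ne.symm h2, h1 ▸ h3⟩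
  loopless := by
    constructor
    rintro a (⟨h1, h2, h3⟩ | ⟨h1, h2, h3⟩)
    · exact G.irrefl h2
    · exact h2 rfl

/-- Weight of a horizontal configuration in model E₂: each copy of an edge `e` of `G`
is present with probability `p e`, independently (non-edges carry weight 1/2 each so
that the total mass is 1). -/
def wE2 [Fintype V] [DecidableEq V] (G : SimpleGraph V) (p : Sym2 V → ℝ)
    (σ : Sym2 V → Bool → Bool) : ℝ :=
  ∏ e : Sym2 V, ∏ b : Bool,
    if e ∈ G.edgeSet then (if σ e b then p e else 1 - p e) else 1 / 2

/-- Connection probability in model E₂^{p,T}. -/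
def PE2 [Fintype V] [DecidableEq V] (G : SimpleGraph V) (p : Sym2 V → ℝ) (T : Set V)
    (x y : V × Bool) : ℝ :=
  ∑ σ : Sym2 V → Bool → Bool, wE2 G p σ * pInd ((bbGraph G σ T).Reachable x y)

/-- Connection probability in model E₁^p: every edge of the bunkbed graph (horizontal
and vertical) present independently with probability `p`. -/
def PE1 [Fintype V] [DecidableEq V] (G : SimpleGraph V) (p : ℝ) (x y : V × Bool) : ℝ :=
  ∑ σ : Sym2 V → Bool → Bool, ∑ η : V → Bool,
    wE2 G (fun _ => p) σ * (∏ v : V, if η v then p else 1 - p) *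
      pInd ((bbGraph G σ {v | η v = true}).Reachable x y)

/-- The colored presence graph of model E₃: each edge of `G` is colored red (`false`,
downstairs) or blue (`true`, upstairs) and lives in the layer given by its color;
vertical edges are present exactly at the transversal vertices `T`. A walk in the
colored graph changing colors only at `T` is the same thing as a path in this graph. -/
def ccGraph (G : SimpleGraph V) (c : Sym2 V → Bool) (T : Set V) :
    SimpleGraph (V × Bool) where
  Adj a b := (a.2 = b.2 ∧ G.Adj a.1 b.1 ∧ c s(a.1, b.1) = a.2) ∨
    (a.1 = b.1 ∧ a.2 ≠ b.2 ∧ a.1 ∈ T)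
  symm := by
    constructor
    intro a b h
    rcases h with ⟨h1, h2, h3⟩ | ⟨h1, h2, h3⟩
    · exact Or.inl ⟨h1.symm, h2.symm, by rwa [Sym2.eq_swap, ← h1]⟩
    · exact Or.inr ⟨h1.symm, Ne.symm h2, h1 ▸ h3⟩
  loopless := by
    constructor
    rintro a (⟨h1, h2, h3⟩ | ⟨h1, h2, h3⟩)
    · exact G.irrefl h2
    · exact h2 rfl

/-- Connection probability in model E₃^T (uniform independent red/blue coloring). -/
def PE3 [Fintype V] [DecidableEq V] (G : SimpleGraph V) (T : Set V) (x y : V × Bool) : ℝ :=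
  (∑ c : Sym2 V → Bool, pInd ((ccGraph G c T).Reachable x y)) / 2 ^ Fintype.card (Sym2 V)

/-- `G'` is a minor of `G`: there are pairwise disjoint branch sets `f a ⊆ V(G)`,
one for each vertex `a` of `G'`, each inducing a connected (nonempty) subgraph of `G`,
such that every edge of `G'` is realized by an edge of `G` between the corresponding
branch sets. -/
def IsMinor {W : Type} (G' : SimpleGraph W) (G : SimpleGraph V) : Prop :=
  ∃ f : W → Set V,
    (∀ a, (G.induce (f a)).Connected) ∧
    (∀ a b, a ≠ b → Disjoint (f a) (f b)) ∧
    (∀ a b, G'.Adj a b → ∃ x ∈ f a, ∃ y ∈ f b, G.Adj x y)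

/-! ### Auxiliary machinery for the proof -/

namespace BBAux

/-- Abbreviation for the state space of one (horizontal pair of) edge(s). -/
abbrev A : Type := Bool → Bool

/-- Generic weighted sum over configurations. -/
def GS {ι : Type} [Fintype ι] [DecidableEq ι] (E : Finset ι) (w : ι → A → ℝ)
    (g : (ι → A) → ℝ) : ℝ :=
  ∑ σ : ι → A, (∏ e ∈ E, w e (σ e)) * g σ

lemma GS_congr {ι : Type} [Fintype ι] [DecidableEq ι] (E : Finset ι) (w : ι → A → ℝ)
    (g₁ g₂ : (ι → A) → ℝ)
    (h : ∀ σ : ι → A, (∏ e ∈ E, w e (σ e)) ≠ 0 → g₁ σ = g₂ σ) :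
    GS E w g₁ = GS E w g₂ := by
  refine Finset.sum_congr rfl fun σ _ => ?_
  by_cases h0 : (∏ e ∈ E, w e (σ e)) = 0
  · rw [h0, zero_mul, zero_mul]
  · rw [h σ h0]

lemma GS_lin3 {ι : Type} [Fintype ι] [DecidableEq ι] (E : Finset ι)
    (w w₁ w₂ w₃ : ι → A → ℝ) (g : (ι → A) → ℝ) (e₀ : ι) (he : e₀ ∈ E)
    (hag : ∀ e, e ≠ e₀ → w₁ e = w e ∧ w₂ e = w e ∧ w₃ e = w e)
    (α β γ : ℝ) (hw : ∀ a, w e₀ a = α * w₁ e₀ a + β * w₂ e₀ a + γ * w₃ e₀ a) :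
    GS E w g = α * GS E w₁ g + β * GS E w₂ g + γ * GS E w₃ g := by
  unfold GS
  rw [Finset.mul_sum, Finset.mul_sum, Finset.mul_sum, ← Finset.sum_add_distrib,
    ← Finset.sum_add_distrib]
  refine Finset.sum_congr rfl fun σ _ => ?_
  rw [← Finset.mul_prod_erase E _ he, ← Finset.mul_prod_erase E (fun e => w₁ e (σ e)) he,
    ← Finset.mul_prod_erase E (fun e => w₂ e (σ e)) he,
    ← Finset.mul_prod_erase E (fun e => w₃ e (σ e)) he]
  have h1 : ∀ (wx : ι → A → ℝ), (∀ e, e ≠ e₀ → wx e = w e) →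
      (∏ e ∈ E.erase e₀, wx e (σ e)) = ∏ e ∈ E.erase e₀, w e (σ e) := by
    intro wx hx
    exact Finset.prod_congr rfl fun e he' => by rw [hx e (Finset.ne_of_mem_erase he')]
  rw [h1 w₁ (fun e he' => (hag e he').1), h1 w₂ (fun e he' => (hag e he').2.1),
    h1 w₃ (fun e he' => (hag e he').2.2), hw (σ e₀)]
  ring

/-- Splitting a `GS` sum according to the coordinates satisfying `P`. -/
lemma GS_splitP {ι : Type} [Fintype ι] [DecidableEq ι] (P : ι → Prop) [DecidablePred P]
    (E : Finset ι) (w : ι → A → ℝ) (g : (ι → A) → ℝ) :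
    GS E w g = ∑ f : {i // P i} → A,
      (∏ i ∈ E.subtype P, w i.1 (f i)) *
        GS (E.subtype (fun i => ¬ P i)) (fun i => w i.1)
          (fun ρ => g (fun x => if h : P x then f ⟨x, h⟩ else ρ ⟨x, h⟩)) := by
  unfold GS
  rw [← Equiv.sum_comp (Equiv.piEquivPiSubtypeProd P (fun _ => A)).symm
      (fun σ : ι → A => (∏ e ∈ E, w e (σ e)) * g σ)]
  rw [Fintype.sum_prod_type]
  refine Finset.sum_congr rfl fun f _ => ?_
  rw [Finset.mul_sum]
  refine Finset.sum_congr rfl fun ρ _ => ?_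
  have hval : ∀ x, (Equiv.piEquivPiSubtypeProd P (fun _ => A)).symm (f, ρ) x
      = if h : P x then f ⟨x, h⟩ else ρ ⟨x, h⟩ := fun x => rfl
  have hsplit : (∏ e ∈ E, w e ((Equiv.piEquivPiSubtypeProd P (fun _ => A)).symm (f, ρ) e))
      = (∏ i ∈ E.subtype P, w i.1 (f i)) *
        ∏ i ∈ E.subtype (fun i => ¬ P i), w i.1 (ρ i) := by
    rw [← Finset.prod_filter_mul_prod_filter_not E P]
    congr 1
    · rw [← Finset.prod_subtype_eq_prod_filter
        (fun x => w x ((Equiv.piEquivPiSubtypeProd P (fun _ => A)).symm (f, ρ) x))]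
      refine Finset.prod_congr rfl fun i _ => ?_
      rw [hval i.1, dif_pos i.2]
    · rw [← Finset.prod_subtype_eq_prod_filter
        (fun x => w x ((Equiv.piEquivPiSubtypeProd P (fun _ => A)).symm (f, ρ) x))]
      refine Finset.prod_congr rfl fun i _ => ?_
      rw [hval i.1, dif_neg i.2]
  rw [hsplit, mul_assoc]
  exact congrArg _ (congrArg _ (congrArg g (funext hval)))

/-- Splitting off a single coordinate. -/
lemma GS_split1 {ι : Type} [Fintype ι] [DecidableEq ι] (E : Finset ι) (w : ι → A → ℝ)
    (g : (ι → A) → ℝ) (e₀ : ι) (he : e₀ ∈ E) :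
    GS E w g = ∑ a : A, w e₀ a *
      GS (E.subtype (fun i => i ≠ e₀)) (fun i => w i.1)
        (fun ρ => g (fun x => if h : x = e₀ then a else ρ ⟨x, h⟩)) := by
  unfold GS
  rw [← Equiv.sum_comp (Equiv.funSplitAt e₀ A).symm
      (fun σ : ι → A => (∏ e ∈ E, w e (σ e)) * g σ)]
  rw [Fintype.sum_prod_type]
  refine Finset.sum_congr rfl fun a _ => ?_
  rw [Finset.mul_sum]
  refine Finset.sum_congr rfl fun ρ _ => ?_
  have hval : ∀ x, (Equiv.funSplitAt e₀ A).symm (a, ρ) x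
      = if h : x = e₀ then a else ρ ⟨x, h⟩ := by
    intro x
    by_cases h : x = e₀
    · subst h
      simp [Equiv.funSplitAt, Equiv.piSplitAt]
    · simp [Equiv.funSplitAt, Equiv.piSplitAt, h]
  have hsplit : (∏ e ∈ E, w e ((Equiv.funSplitAt e₀ A).symm (a, ρ) e))
      = w e₀ a * ∏ i ∈ E.subtype (fun i => i ≠ e₀), w i.1 (ρ i) := by
    rw [← Finset.mul_prod_erase E _ he]
    congr 1
    · rw [hval e₀, dif_pos rfl]
    · rw [← Finset.filter_ne' E e₀, ← Finset.prod_subtype_eq_prod_filter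
        (fun x => w x ((Equiv.funSplitAt e₀ A).symm (a, ρ) x)) (p := fun i => i ≠ e₀)]
      refine Finset.prod_congr rfl fun i _ => ?_
      rw [hval i.1, dif_neg i.2]
  rw [hsplit, mul_assoc]
  exact congrArg _ (congrArg _ (congrArg g (funext hval)))

lemma sum_A (F : A → ℝ) :
    ∑ a : A, F a = F (fun _ => false) + F (fun _ => true) + F (fun b => b) + F (fun b => !b) := by
  rw [← Equiv.sum_comp (Equiv.boolArrowEquivProd Bool).symm F, Fintype.sum_prod_type]
  rw [Fintype.sum_bool, Fintype.sum_bool, Fintype.sum_bool]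
  have e1 : ((Equiv.boolArrowEquivProd Bool).symm (false, false)) = (fun _ => false) := by
    funext b; cases b <;> rfl
  have e2 : ((Equiv.boolArrowEquivProd Bool).symm (true, true)) = (fun _ => true) := by
    funext b; cases b <;> rfl
  have e3 : ((Equiv.boolArrowEquivProd Bool).symm (false, true)) = (fun b => b) := by
    funext b; cases b <;> rfl
  have e4 : ((Equiv.boolArrowEquivProd Bool).symm (true, false)) = (fun b => !b) := by
    funext b; cases b <;> rfl
  rw [e1, e2, e3, e4]
  ring

lemma sum_prod_eval {ι : Type} [Fintype ι] [DecidableEq ι] (w : ι → A → ℝ) :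
    ∑ σ : ι → A, ∏ e, w e (σ e) = ∏ e, ∑ a : A, w e a :=
  (Finset.prod_univ_sum (fun _ => (Finset.univ : Finset A)) (fun e a => w e a)).symm

lemma GS_const {ι : Type} [Fintype ι] [DecidableEq ι] (E : Finset ι) (w : ι → A → ℝ)
    (h1 : ∀ e ∈ E, ∑ a : A, w e a = 1) (k : ℝ) :
    GS E w (fun _ => k) = (4 : ℝ) ^ (Fintype.card ι - E.card) * k := by
  unfold GS
  rw [← Finset.sum_mul]
  congr 1
  have hpad : ∀ σ : ι → A, (∏ e ∈ E, w e (σ e))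
      = ∏ e, (fun e a => if e ∈ E then w e a else 1) e (σ e) := by
    intro σ
    rw [Finset.prod_ite_mem Finset.univ E (fun e => w e (σ e))]
    rw [Finset.univ_inter]
  have hs : (∑ σ : ι → A, ∏ e ∈ E, w e (σ e))
      = ∑ σ : ι → A, ∏ e, (fun e a => if e ∈ E then w e a else 1) e (σ e) :=
    Finset.sum_congr rfl (fun σ _ => hpad σ)
  rw [hs, sum_prod_eval (fun e a => if e ∈ E then w e a else 1)]
  have : ∀ e, (∑ a : A, if e ∈ E then w e a else 1) = if e ∈ E then 1 else 4 := by
    intro e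
    by_cases he : e ∈ E
    · simp only [he, if_true]; exact h1 e he
    · simp only [he, if_false]
      rw [Finset.sum_const, Finset.card_univ]
      norm_num [Fintype.card_fun]
  have hp2 : (∏ e, ∑ a : A, (fun e a => if e ∈ E then w e a else 1) e a)
      = ∏ e, if e ∈ E then (1:ℝ) else 4 := Finset.prod_congr rfl (fun e _ => this e)
  rw [hp2]
  rw [Finset.prod_ite, Finset.prod_const_one, one_mul, Finset.prod_const]
  congr 1
  rw [Finset.filter_not, Finset.card_sdiff_of_subset (Finset.filter_subset _ _),
    Finset.filter_univ_mem, Finset.card_univ]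

/-- Summing a function of `c ∘ j` over all `c`, for an injective `j`. -/
lemma sum_comp_inj {β γ : Type} [Fintype β] [Fintype γ] [DecidableEq β] [DecidableEq γ]
    (j : β → γ) (hj : Function.Injective j) (F : (β → Bool) → ℝ) :
    ∑ c : γ → Bool, F (c ∘ j) =
      (2 : ℝ) ^ (Fintype.card {x : γ // x ∉ Set.range j}) * ∑ b : β → Bool, F b := by
  classical
  let e : (γ → Bool) ≃ (β → Bool) × ({x : γ // x ∉ Set.range j} → Bool) :=
    { toFun := fun c => (c ∘ j, fun x => c x.1)
      invFun := fun br x => if h : x ∈ Set.range j then br.1 h.choose else br.2 ⟨x, h⟩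
      left_inv := by
        intro c
        funext x
        dsimp only
        by_cases h : x ∈ Set.range j
        · rw [dif_pos h]
          exact congrArg c h.choose_spec
        · rw [dif_neg h]
      right_inv := by
        rintro ⟨b, r⟩
        dsimp only
        refine Prod.ext ?_ ?_
        · funext y
          have h : j y ∈ Set.range j := ⟨y, rfl⟩
          dsimp only [Function.comp_apply]
          rw [dif_pos h]
          exact congrArg b (hj h.choose_spec)
        · funext x
          dsimp only
          rw [dif_neg x.2] }
  rw [← Equiv.sum_comp e.symm (fun c : γ → Bool => F (c ∘ j))]
  rw [Fintype.sum_prod_type]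
  have hev : ∀ (b : β → Bool) (r : {x : γ // x ∉ Set.range j} → Bool),
      (e.symm (b, r)) ∘ j = b := by
    intro b r
    funext y
    have h : j y ∈ Set.range j := ⟨y, rfl⟩
    show (if h : j y ∈ Set.range j then b h.choose else r ⟨j y, h⟩) = b y
    rw [dif_pos h]
    congr 1
    exact hj h.choose_spec
  have hss : (∑ b : β → Bool, ∑ r : {x : γ // x ∉ Set.range j} → Bool, F ((e.symm (b, r)) ∘ j))
      = ∑ b : β → Bool, ∑ _r : {x : γ // x ∉ Set.range j} → Bool, F b :=
    Finset.sum_congr rfl (fun b _ => Finset.sum_congr rfl (fun r _ => by rw [hev b r]))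
  rw [hss]
  have hc : ∀ b : β → Bool, (∑ _r : {x : γ // x ∉ Set.range j} → Bool, F b)
      = (2:ℝ) ^ (Fintype.card {x : γ // x ∉ Set.range j}) * F b := by
    intro b
    rw [Finset.sum_const, Finset.card_univ, nsmul_eq_mul, Fintype.card_fun, Fintype.card_bool]
    norm_num
  rw [Finset.sum_congr rfl (fun b _ => hc b), ← Finset.mul_sum]

/-! ### Graph-side lemmas -/

lemma reach_map {α β : Type} {H₁ : SimpleGraph α} {H₂ : SimpleGraph β} (F : α → β)
    (h : ∀ a b, H₁.Adj a b → H₂.Reachable (F a) (F b)) {x y : α}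
    (hr : H₁.Reachable x y) : H₂.Reachable (F x) (F y) := by
  obtain ⟨w⟩ := hr
  induction w with
  | nil => exact SimpleGraph.Reachable.refl _
  | cons ha _ ih => exact SimpleGraph.Reachable.trans (h _ _ ha) ih

lemma pInd_congr {P Q : Prop} (h : P ↔ Q) : pInd P = pInd Q := by
  unfold pInd
  by_cases hp : P
  · rw [if_pos hp, if_pos (h.mp hp)]
  · rw [if_neg hp, if_neg (fun hq => hp (h.mpr hq))]

lemma pInd_nonneg (P : Prop) : 0 ≤ pInd P := by
  unfold pInd; split <;> norm_num

variable {V : Type}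

lemma bb_adj_h {G : SimpleGraph V} {σ : Sym2 V → A} {T : Set V} {x y : V} (i : Bool)
    (hxy : G.Adj x y) (hσ : σ s(x, y) i = true) : (bbGraph G σ T).Adj (x, i) (y, i) :=
  Or.inl ⟨rfl, hxy, hσ⟩

lemma bb_adj_v {G : SimpleGraph V} {σ : Sym2 V → A} {T : Set V} {x : V} (hx : x ∈ T)
    {i j : Bool} (hij : i ≠ j) : (bbGraph G σ T).Adj (x, i) (x, j) :=
  Or.inr ⟨rfl, hij, hx⟩

lemma bb_reach_mono {G : SimpleGraph V} {σ σ' : Sym2 V → A} {T : Set V}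
    (himp : ∀ x y (i : Bool), G.Adj x y → σ s(x, y) i = true →
      (bbGraph G σ' T).Reachable (x, i) (y, i)) {q₁ q₂ : V × Bool}
    (hr : (bbGraph G σ T).Reachable q₁ q₂) : (bbGraph G σ' T).Reachable q₁ q₂ := by
  have := reach_map (H₁ := bbGraph G σ T) (H₂ := bbGraph G σ' T) id ?_ hr
  · exact this
  · rintro ⟨a1, a2⟩ ⟨b1, b2⟩ (⟨h1, h2, h3⟩ | ⟨h1, h2, h3⟩)
    · cases h1
      exact himp a1 b1 a2 h2 h3
    · cases h1
      exact (bb_adj_v h3 h2).reachable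

/-! ### The status model -/

inductive St : Type
  | B | N | U | Pr
  deriving DecidableEq

def wSt (q : ℝ) : St → A → ℝ
  | .B => fun a => (if a false then (1 : ℝ) else 0) * (if a true then (1 : ℝ) else 0)
  | .N => fun a => (if a false then (0 : ℝ) else 1) * (if a true then (0 : ℝ) else 1)
  | .U => fun a => if a false = a true then 0 else 1 / 2
  | .Pr => fun a => (if a false then q else 1 - q) * (if a true then q else 1 - q)

lemma wB_support {q : ℝ} {a : A} (h : wSt q .B a ≠ 0) : a = fun _ => true := by
  funext b
  by_cases hf : a false <;> by_cases ht : a true <;>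
    simp [wSt, hf, ht] at h ⊢ <;> cases b <;> simp [hf, ht]

lemma wN_support {q : ℝ} {a : A} (h : wSt q .N a ≠ 0) : a = fun _ => false := by
  funext b
  by_cases hf : a false <;> by_cases ht : a true <;>
    simp [wSt, hf, ht] at h ⊢ <;> cases b <;> simp [hf, ht]

lemma wSt_sum_one (q : ℝ) (st : St) (hst : st ≠ .Pr) : ∑ a : A, wSt q st a = 1 := by
  rw [sum_A]
  cases st <;> simp [wSt] <;> norm_num
  exact absurd rfl hst

section Model

variable [Fintype V] [DecidableEq V] (G : SimpleGraph V)

/-- The edges of `G` as a finset of `Sym2 V`. -/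
def EF : Finset (Sym2 V) := Finset.univ.filter (· ∈ G.edgeSet)

lemma mem_EF {x y : V} : s(x, y) ∈ EF G ↔ G.Adj x y := by
  simp [EF, SimpleGraph.mem_edgeSet]

lemma mem_EF' {e : Sym2 V} : e ∈ EF G ↔ e ∈ G.edgeSet := by
  simp [EF]

def wOf (p : Sym2 V → ℝ) (t : Sym2 V → St) : Sym2 V → A → ℝ := fun e => wSt (p e) (t e)

/-- The master sum in the generalized (status) model. -/
def SS (p : Sym2 V → ℝ) (t : Sym2 V → St) (g : (Sym2 V → A) → ℝ) : ℝ :=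
  GS (EF G) (wOf p t) g

/-- The graph of `Both` edges. -/
def Ht (t : Sym2 V → St) : SimpleGraph V where
  Adj x y := G.Adj x y ∧ t s(x, y) = .B
  symm := by
    constructor
    intro x y h
    exact ⟨h.1.symm, by rw [Sym2.eq_swap]; exact h.2⟩
  loopless := ⟨fun x h => G.irrefl h.1⟩

def Match (t : Sym2 V → St) (σ : Sym2 V → A) : Prop :=
  ∀ x y, G.Adj x y → t s(x, y) = .B → σ s(x, y) = fun _ => true

lemma reach_layer {t : Sym2 V → St} {σ : Sym2 V → A} {T : Set V} (hM : Match G t σ)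
    {x y : V} (hr : (Ht G t).Reachable x y) (i : Bool) :
    (bbGraph G σ T).Reachable (x, i) (y, i) := by
  refine reach_map (fun z => (z, i)) ?_ hr
  intro a b hab
  exact (bb_adj_h i hab.1 (by rw [hM a b hab.1 hab.2])).reachable

lemma match_ext {p : Sym2 V → ℝ} {t : Sym2 V → St} {e₀ : Sym2 V} (a : A)
    {ρ : {i : Sym2 V // i ≠ e₀} → A} (ht : t e₀ ≠ .B)
    (h : (∏ i ∈ (EF G).subtype (fun i => i ≠ e₀), wOf p t i.1 (ρ i)) ≠ 0) :
    Match G t (fun x => if h : x = e₀ then a else ρ ⟨x, h⟩) := by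
  intro x y hxy hB
  by_cases hx : s(x, y) = e₀
  · exact absurd (hx ▸ hB) ht
  · show (if h : s(x, y) = e₀ then a else ρ ⟨s(x, y), h⟩) = fun _ => true
    rw [dif_neg hx]
    have hmem : (⟨s(x, y), hx⟩ : {i : Sym2 V // i ≠ e₀}) ∈ (EF G).subtype (fun i => i ≠ e₀) := by
      rw [Finset.mem_subtype]
      exact (mem_EF G).mpr hxy
    have hfac := Finset.prod_ne_zero_iff.mp h _ hmem
    rw [wOf, hB] at hfac
    exact wB_support hfac

/-- Conditioning on a `Prob` edge. -/
lemma step_P {p : Sym2 V → ℝ} {t : Sym2 V → St} (g : (Sym2 V → A) → ℝ) (x₀ y₀ : V)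
    (hxy : G.Adj x₀ y₀) (ht : t s(x₀, y₀) = .Pr) :
    SS G p t g = (p s(x₀, y₀)) ^ 2 * SS G p (Function.update t s(x₀, y₀) .B) g
      + (1 - p s(x₀, y₀)) ^ 2 * SS G p (Function.update t s(x₀, y₀) .N) g
      + (2 * p s(x₀, y₀) * (1 - p s(x₀, y₀))) * SS G p (Function.update t s(x₀, y₀) .U) g := by
  unfold SS
  refine GS_lin3 (EF G) _ _ _ _ g s(x₀, y₀) ((mem_EF G).mpr hxy) ?_ _ _ _ ?_
  · intro e he
    refine ⟨?_, ?_, ?_⟩ <;>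
      · unfold wOf
        rw [Function.update_of_ne he]
  · intro a
    unfold wOf
    rw [Function.update_self, Function.update_self, Function.update_self, ht]
    by_cases hf : a false <;> by_cases htt : a true <;>
      simp [wSt, hf, htt] <;> ring

/-- Removing a `Uniform` edge whose endpoints are joined by `Both` edges. -/
lemma step_degen {p : Sym2 V → ℝ} {t : Sym2 V → St} (T : Set V) (P₀ Q₀ : V × Bool)
    (x₀ y₀ : V) (hxy : G.Adj x₀ y₀) (ht : t s(x₀, y₀) = .U)
    (hR : (Ht G t).Reachable x₀ y₀) :
    SS G p t (fun σ => pInd ((bbGraph G σ T).Reachable P₀ Q₀)) =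
      SS G p (Function.update t s(x₀, y₀) .N)
        (fun σ => pInd ((bbGraph G σ T).Reachable P₀ Q₀)) := by
  set e₀ : Sym2 V := s(x₀, y₀) with he₀def
  set g : (Sym2 V → A) → ℝ := fun σ => pInd ((bbGraph G σ T).Reachable P₀ Q₀) with hgdef
  have he₀ : e₀ ∈ EF G := (mem_EF G).mpr hxy
  unfold SS
  rw [GS_split1 (EF G) (wOf p t) g e₀ he₀,
    GS_split1 (EF G) (wOf p (Function.update t e₀ .N)) g e₀ he₀]
  have hwrest : (fun i : {i : Sym2 V // i ≠ e₀} => wOf p (Function.update t e₀ .N) i.1)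
      = fun i => wOf p t i.1 := by
    funext i
    unfold wOf
    rw [Function.update_of_ne i.2]
  rw [hwrest]
  set Inner : A → ℝ := fun a => GS ((EF G).subtype (fun i => i ≠ e₀)) (fun i => wOf p t i.1)
      (fun ρ => g (fun x => if h : x = e₀ then a else ρ ⟨x, h⟩)) with hInner
  show ∑ a : A, wOf p t e₀ a * Inner a
      = ∑ a : A, wOf p (Function.update t e₀ .N) e₀ a * Inner a
  have hInner_eq : ∀ a : A, a false ≠ a true → Inner a = Inner (fun _ => false) := by
    intro a hne
    refine GS_congr _ _ _ _ fun ρ hρ => ?_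
    have hMa : Match G t (fun x => if h : x = e₀ then a else ρ ⟨x, h⟩) :=
      match_ext G a (by rw [ht]; exact fun hc => St.noConfusion hc) hρ
    have hMn : Match G t (fun x => if h : x = e₀ then (fun _ => false) else ρ ⟨x, h⟩) :=
      match_ext G _ (by rw [ht]; exact fun hc => St.noConfusion hc) hρ
    refine pInd_congr ⟨bb_reach_mono ?_, bb_reach_mono ?_⟩
    · intro x y i hxy' hσ
      by_cases hx : s(x, y) = e₀
      · rcases Sym2.eq_iff.mp (he₀def ▸ hx) with ⟨hx1, hy1⟩ | ⟨hx1, hy1⟩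
        · subst hx1; subst hy1
          exact reach_layer G hMn hR i
        · subst hx1; subst hy1
          exact reach_layer G hMn hR.symm i
      · refine (bb_adj_h i hxy' ?_).reachable
        rw [dif_neg hx]
        rw [dif_neg hx] at hσ
        exact hσ
    · intro x y i hxy' hσ
      by_cases hx : s(x, y) = e₀
      · rw [dif_pos hx] at hσ
        exact absurd hσ (by simp)
      · refine (bb_adj_h i hxy' ?_).reachable
        rw [dif_neg hx]
        rw [dif_neg hx] at hσ
        exact hσ
  rw [sum_A (fun a => wOf p t e₀ a * Inner a),
    sum_A (fun a => wOf p (Function.update t e₀ .N) e₀ a * Inner a)]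
  have h1 : Inner (fun b => b) = Inner (fun _ => false) := hInner_eq _ (by simp)
  have h2 : Inner (fun b => !b) = Inner (fun _ => false) := hInner_eq _ (by simp)
  rw [h1, h2]
  unfold wOf
  rw [Function.update_self, ht]
  simp [wSt]
  ring

/-- Merging two parallel `Uniform` edges. -/
lemma step_parallel {p : Sym2 V → ℝ} {t : Sym2 V → St} (T : Set V) (P₀ Q₀ : V × Bool)
    (x₀ y₀ x₁ y₁ : V) (hxy0 : G.Adj x₀ y₀) (hxy1 : G.Adj x₁ y₁)
    (ht0 : t s(x₀, y₀) = .U) (ht1 : t s(x₁, y₁) = .U)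
    (hne : s(x₀, y₀) ≠ s(x₁, y₁))
    (hRx : (Ht G t).Reachable x₀ x₁) (hRy : (Ht G t).Reachable y₀ y₁) :
    SS G p t (fun σ => pInd ((bbGraph G σ T).Reachable P₀ Q₀)) =
      1 / 2 * SS G p (Function.update t s(x₁, y₁) .N)
          (fun σ => pInd ((bbGraph G σ T).Reachable P₀ Q₀))
        + 1 / 2 * SS G p (Function.update (Function.update t s(x₁, y₁) .N) s(x₀, y₀) .B)
          (fun σ => pInd ((bbGraph G σ T).Reachable P₀ Q₀)) := by
  set e₀ : Sym2 V := s(x₀, y₀) with he₀def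
  set e₁ : Sym2 V := s(x₁, y₁) with he₁def
  have h10 : e₁ ≠ e₀ := fun hc => hne hc.symm
  set g : (Sym2 V → A) → ℝ := fun σ => pInd ((bbGraph G σ T).Reachable P₀ Q₀) with hgdef
  have he₀ : e₀ ∈ EF G := (mem_EF G).mpr hxy0
  set f₁ : {i : Sym2 V // i ≠ e₀} := ⟨e₁, h10⟩ with hf₁def
  have hf₁ : f₁ ∈ (EF G).subtype (fun i => i ≠ e₀) :=
    Finset.mem_subtype.mpr ((mem_EF G).mpr hxy1)
  set comb : A → A → ({j : {i : Sym2 V // i ≠ e₀} // j ≠ f₁} → A) → Sym2 V → A :=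
    fun a b ρ x => if h : x = e₀ then a else
      if h' : (⟨x, h⟩ : {i : Sym2 V // i ≠ e₀}) = f₁ then b else ρ ⟨⟨x, h⟩, h'⟩ with hcombdef
  set E₂ : Finset {j : {i : Sym2 V // i ≠ e₀} // j ≠ f₁} :=
    ((EF G).subtype (fun i => i ≠ e₀)).subtype (fun j => j ≠ f₁) with hE₂def
  set w₂ : {j : {i : Sym2 V // i ≠ e₀} // j ≠ f₁} → A → ℝ := fun j => wOf p t j.1.1 with hw₂def
  set K : A → A → ℝ := fun a b => GS E₂ w₂ (fun ρ => g (comb a b ρ)) with hKdef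
  -- value lemmas for comb
  have hv0 : ∀ a b ρ, comb a b ρ e₀ = a := fun a b ρ => dif_pos rfl
  have hv1 : ∀ a b ρ, comb a b ρ e₁ = b := by
    intro a b ρ
    show (if h : e₁ = e₀ then a else
      if h' : (⟨e₁, h⟩ : {i : Sym2 V // i ≠ e₀}) = f₁ then b else ρ ⟨⟨e₁, h⟩, h'⟩) = b
    rw [dif_neg h10, dif_pos rfl]
  have hvo : ∀ (e : Sym2 V) (h0 : e ≠ e₀) (h1 : e ≠ e₁) a b ρ,
      comb a b ρ e = ρ ⟨⟨e, h0⟩, fun hc => h1 (congrArg Subtype.val hc)⟩ := by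
    intro e h0 h1 a b ρ
    show (if h : e = e₀ then a else
      if h' : (⟨e, h⟩ : {i : Sym2 V // i ≠ e₀}) = f₁ then b else ρ ⟨⟨e, h⟩, h'⟩) = _
    rw [dif_neg h0, dif_neg (fun hc => h1 (congrArg Subtype.val hc))]
  have hne0 : ∀ {x y : V}, G.Adj x y → t s(x, y) = .B → s(x, y) ≠ e₀ := by
    intro x y _ hB hc
    rw [hc, ht0] at hB
    exact St.noConfusion hB
  have hne1 : ∀ {x y : V}, G.Adj x y → t s(x, y) = .B → s(x, y) ≠ e₁ := by
    intro x y _ hB hc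
    rw [hc, ht1] at hB
    exact St.noConfusion hB
  have hMatch : ∀ a b ρ, (∏ j ∈ E₂, w₂ j (ρ j)) ≠ 0 → Match G t (comb a b ρ) := by
    intro a b ρ hρ x y hxy hB
    have h0 := hne0 hxy hB
    have h1 := hne1 hxy hB
    rw [hvo _ h0 h1]
    have hmem : (⟨⟨s(x, y), h0⟩, fun hc => h1 (congrArg Subtype.val hc)⟩ :
        {j : {i : Sym2 V // i ≠ e₀} // j ≠ f₁}) ∈ E₂ := by
      rw [hE₂def, Finset.mem_subtype, Finset.mem_subtype]
      exact (mem_EF G).mpr hxy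
    have hfac := Finset.prod_ne_zero_iff.mp hρ _ hmem
    simp only [hw₂def, wOf] at hfac
    rw [hB] at hfac
    exact wB_support hfac
  -- transfer lemma between two comb-configurations
  have htrans : ∀ (a b a' b' : A) (ρ : _),
      ((∏ j ∈ E₂, w₂ j (ρ j)) ≠ 0) →
      (∀ i : Bool, a i = true → (bbGraph G (comb a' b' ρ) T).Reachable (x₀, i) (y₀, i)) →
      (∀ i : Bool, b i = true → (bbGraph G (comb a' b' ρ) T).Reachable (x₁, i) (y₁, i)) →
      ∀ {q₁ q₂ : V × Bool}, (bbGraph G (comb a b ρ) T).Reachable q₁ q₂ →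
        (bbGraph G (comb a' b' ρ) T).Reachable q₁ q₂ := by
    intro a b a' b' ρ hρ c₀ c₁ q₁ q₂ hr
    refine bb_reach_mono ?_ hr
    intro x y i hxy hσ
    by_cases hx0 : s(x, y) = e₀
    · rw [hx0, hv0] at hσ
      rcases Sym2.eq_iff.mp (he₀def ▸ hx0) with ⟨hx1, hy1⟩ | ⟨hx1, hy1⟩
      · subst hx1; subst hy1
        exact c₀ i hσ
      · subst hx1; subst hy1
        exact (c₀ i hσ).symm
    · by_cases hx1 : s(x, y) = e₁
      · rw [hx1, hv1] at hσ
        rcases Sym2.eq_iff.mp (he₁def ▸ hx1) with ⟨ha, hb⟩ | ⟨ha, hb⟩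
        · subst ha; subst hb
          exact c₁ i hσ
        · subst ha; subst hb
          exact (c₁ i hσ).symm
      · refine (bb_adj_h i hxy ?_).reachable
        rw [hvo _ hx0 hx1]
        rw [hvo _ hx0 hx1] at hσ
        exact hσ
  -- the K-equalities
  have k1 : ∀ c : A, K c c = K c (fun _ => false) := by
    intro c
    refine GS_congr _ _ _ _ fun ρ hρ => ?_
    have hM' := hMatch c (fun _ => false) ρ hρ
    refine pInd_congr ⟨htrans c c c (fun _ => false) ρ hρ ?_ ?_, 
      htrans c (fun _ => false) c c ρ hρ ?_ ?_⟩
    · intro i hi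
      exact (bb_adj_h i hxy0 (by rw [← he₀def, hv0]; exact hi)).reachable
    · intro i hi
      refine ((reach_layer G hM' hRx.symm i).trans
        ((bb_adj_h i hxy0 (by rw [← he₀def, hv0]; exact hi)).reachable)).trans
        (reach_layer G hM' hRy i)
    · intro i hi
      exact (bb_adj_h i hxy0 (by rw [← he₀def, hv0]; exact hi)).reachable
    · intro i hi
      exact absurd hi (by simp)
  have k2 : ∀ c c' : A, (∀ i, c' i = !(c i)) →
      K c c' = K (fun _ => true) (fun _ => false) := by
    intro c c' hcc
    refine GS_congr _ _ _ _ fun ρ hρ => ?_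
    have hM1 := hMatch (fun _ => (true : Bool)) (fun _ => (false : Bool)) ρ hρ
    have hM2 := hMatch c c' ρ hρ
    refine pInd_congr ⟨htrans c c' (fun _ => true) (fun _ => false) ρ hρ ?_ ?_,
      htrans (fun _ => true) (fun _ => false) c c' ρ hρ ?_ ?_⟩
    · intro i _
      exact (bb_adj_h i hxy0 (by rw [← he₀def, hv0])).reachable
    · intro i _
      refine ((reach_layer G hM1 hRx.symm i).trans
        ((bb_adj_h i hxy0 (by rw [← he₀def, hv0])).reachable)).trans
        (reach_layer G hM1 hRy i)
    · intro i _
      by_cases hci : c i = true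
      · exact (bb_adj_h i hxy0 (by rw [← he₀def, hv0]; exact hci)).reachable
      · have hci0 : c i = false := by simpa using hci
        have hci' : c' i = true := by rw [hcc i, hci0]; rfl
        refine ((reach_layer G hM2 hRx i).trans
          ((bb_adj_h i hxy1 (by rw [← he₁def, hv1]; exact hci')).reachable)).trans
          (reach_layer G hM2 hRy.symm i)
    · intro i hi
      exact absurd hi (by simp)
  -- double splitting of the three sums
  have hsplit2 : ∀ (t' : Sym2 V → St), (∀ e, e ≠ e₀ → e ≠ e₁ → t' e = t e) →
      SS G p t' g = ∑ a : A, wSt (p e₀) (t' e₀) a *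
        ∑ b : A, wSt (p e₁) (t' e₁) b * K a b := by
    intro t' hagr
    unfold SS
    rw [GS_split1 (EF G) (wOf p t') g e₀ he₀]
    refine Finset.sum_congr rfl fun a _ => ?_
    refine congrArg₂ (· * ·) rfl ?_
    rw [GS_split1 ((EF G).subtype (fun i => i ≠ e₀)) (fun i => wOf p t' i.1) _ f₁ hf₁]
    refine Finset.sum_congr rfl fun b _ => ?_
    refine congrArg₂ (· * ·) rfl ?_
    have hw : (fun (j : {j : {i : Sym2 V // i ≠ e₀} // j ≠ f₁}) => wOf p t' j.1.1) = w₂ := by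
      funext j
      show wSt (p j.1.1) (t' j.1.1) = wSt (p j.1.1) (t j.1.1)
      rw [hagr j.1.1 j.1.2 (fun hc => j.2 (Subtype.ext hc))]
    rw [hKdef, ← hw]
  -- apply and compute
  rw [hsplit2 t (fun _ _ _ => rfl),
    hsplit2 (Function.update t e₁ .N) (fun e _ h1 => Function.update_of_ne h1 _ t),
    hsplit2 (Function.update (Function.update t e₁ .N) e₀ .B)
      (fun e h0 h1 => by rw [Function.update_of_ne h0, Function.update_of_ne h1])]
  have hs2 : Function.update t e₁ St.N e₀ = St.U := by
    rw [Function.update_of_ne hne]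
    exact ht0
  have hs3 : Function.update t e₁ St.N e₁ = St.N := Function.update_self _ _ _
  have hs4 : Function.update (Function.update t e₁ St.N) e₀ St.B e₀ = St.B :=
    Function.update_self _ _ _
  have hs5 : Function.update (Function.update t e₁ St.N) e₀ St.B e₁ = St.N := by
    rw [Function.update_of_ne h10]
    exact Function.update_self _ _ _
  rw [ht0, ht1, hs2, hs3, hs4, hs5]
  have hU : ∀ a : A, (∑ b : A, wSt (p e₁) St.U b * K a b)
      = 1 / 2 * K a (fun b => b) + 1 / 2 * K a (fun b => !b) := by
    intro a
    rw [sum_A (fun b => wSt (p e₁) St.U b * K a b)]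
    simp [wSt]
    try ring
  have hN : ∀ a : A, (∑ b : A, wSt (p e₁) St.N b * K a b) = K a (fun _ => false) := by
    intro a
    rw [sum_A (fun b => wSt (p e₁) St.N b * K a b)]
    simp [wSt]
  simp only [hU, hN]
  rw [sum_A (fun a => wSt (p e₀) St.U a *
      (1 / 2 * K a (fun b => b) + 1 / 2 * K a (fun b => !b))),
    sum_A (fun a => wSt (p e₀) St.U a * K a (fun _ => false)),
    sum_A (fun a => wSt (p e₀) St.B a * K a (fun _ => false))]
  have hk2a : K (fun b => b) (fun b => !b) = K (fun _ => true) (fun _ => false) :=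
    k2 _ _ (fun i => rfl)
  have hk2b : K (fun b => !b) (fun b => b) = K (fun _ => true) (fun _ => false) :=
    k2 _ _ (fun i => by cases i <;> rfl)
  rw [k1 (fun b => b), k1 (fun b => !b), hk2a, hk2b]
  simp [wSt]
  ring

/-! ### The quotient (minor) construction for the base case -/

/-- Connected components of the `Both` graph. -/
def CW (t : Sym2 V → St) : Type := (Ht G t).ConnectedComponent

def cmk (t : Sym2 V → St) : V → CW G t := (Ht G t).connectedComponentMk

lemma cmk_surj (t : Sym2 V → St) : Function.Surjective (cmk G t) :=
  fun q => q.exists_rep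

noncomputable instance (t : Sym2 V → St) : Fintype (CW G t) :=
  have : Finite (CW G t) := Finite.of_surjective _ (cmk_surj G t)
  Fintype.ofFinite (CW G t)

instance (t : Sym2 V → St) : DecidableEq (CW G t) := Classical.decEq _

lemma cmk_eq_iff (t : Sym2 V → St) {x y : V} :
    cmk G t x = cmk G t y ↔ (Ht G t).Reachable x y :=
  SimpleGraph.ConnectedComponent.eq

/-- The quotient graph: one vertex per `Both`-component, edges given by `Uniform` edges. -/
def Gq (t : Sym2 V → St) : SimpleGraph (CW G t) where
  Adj a b := a ≠ b ∧ ∃ x y, G.Adj x y ∧ t s(x, y) = .U ∧ cmk G t x = a ∧ cmk G t y = b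
  symm := by
    constructor
    rintro a b ⟨hab, x, y, h1, h2, h3, h4⟩
    exact ⟨hab.symm, y, x, h1.symm, by rwa [Sym2.eq_swap], h4, h3⟩
  loopless := ⟨fun a h => h.1 rfl⟩

def Tq (t : Sym2 V → St) (T : Set V) : Set (CW G t) := {a | ∃ x, cmk G t x = a ∧ x ∈ T}

def Phi (t : Sym2 V → St) (c : Sym2 (CW G t) → Bool) : Sym2 V → A := fun e =>
  if e ∈ G.edgeSet ∧ t e = .B then (fun _ => true)
  else if e ∈ G.edgeSet ∧ t e = .U then (fun j => j == c (Sym2.map (cmk G t) e))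
  else fun _ => false

lemma Phi_B {t : Sym2 V → St} {c} {x y : V} (hxy : G.Adj x y) (hB : t s(x, y) = .B) :
    Phi G t c s(x, y) = fun _ => true := by
  unfold Phi
  rw [if_pos ⟨(SimpleGraph.mem_edgeSet G).mpr hxy, hB⟩]

lemma Phi_U {t : Sym2 V → St} {c} {x y : V} (hxy : G.Adj x y) (hU : t s(x, y) = .U) :
    Phi G t c s(x, y) = fun j => j == c s(cmk G t x, cmk G t y) := by
  unfold Phi
  rw [if_neg (fun hc => by rw [hU] at hc; exact St.noConfusion hc.2),
    if_pos ⟨(SimpleGraph.mem_edgeSet G).mpr hxy, hU⟩, Sym2.map_pair_eq]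

lemma Phi_N {t : Sym2 V → St} {c} {x y : V} (hxy : G.Adj x y) (hN : t s(x, y) = .N) :
    Phi G t c s(x, y) = fun _ => false := by
  unfold Phi
  rw [if_neg (fun hc => by rw [hN] at hc; exact St.noConfusion hc.2),
    if_neg (fun hc => by rw [hN] at hc; exact St.noConfusion hc.2)]

lemma Phi_match (t : Sym2 V → St) (c) : Match G t (Phi G t c) :=
  fun x y hxy hB => Phi_B G hxy hB

/-- The quotient graph is a minor. -/
lemma Gq_isMinor (t : Sym2 V → St) : IsMinor (Gq G t) G := by
  refine ⟨fun a => {x | cmk G t x = a}, ?_, ?_, ?_⟩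
  · intro a
    have key : ∀ (x y : V) (w : (Ht G t).Walk x y) (hx : cmk G t x = a) (hy : cmk G t y = a),
        (G.induce {x | cmk G t x = a}).Reachable ⟨x, hx⟩ ⟨y, hy⟩ := by
      intro x y w
      induction w with
      | nil => intro hx hy; exact SimpleGraph.Reachable.refl _
      | @cons x' z' y' hadj w ih =>
        intro hx hy
        have hz : cmk G t z' = a := by
          rw [← hx]
          exact (SimpleGraph.ConnectedComponent.connectedComponentMk_eq_of_adj hadj).symm
        have hstep : (G.induce {x | cmk G t x = a}).Adj ⟨x', hx⟩ ⟨z', hz⟩ := hadj.1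
        exact hstep.reachable.trans (ih hz hy)
    obtain ⟨x₀, hx₀⟩ := cmk_surj G t a
    show (G.induce {x | cmk G t x = a}).Connected
    haveI : Nonempty {x | cmk G t x = a} := ⟨⟨x₀, hx₀⟩⟩
    refine ⟨fun q₁ q₂ => ?_⟩
    obtain ⟨x, hx⟩ := q₁
    obtain ⟨y, hy⟩ := q₂
    obtain ⟨w⟩ := (cmk_eq_iff G t).mp ((hx : cmk G t x = a).trans (hy : cmk G t y = a).symm)
    exact key x y w hx hy
  · intro a b hab
    rw [Set.disjoint_left]
    intro x hxa hxb
    exact hab ((hxa : cmk G t x = a).symm.trans hxb)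
  · rintro a b ⟨hne, x, y, hxy, hU, hx, hy⟩
    exact ⟨x, hx, y, hy, hxy⟩

/-- Forward direction of the contraction correspondence. -/
lemma contr_fwd {t : Sym2 V → St} {T : Set V} {c : Sym2 (CW G t) → Bool}
    (hnoP : ∀ x y, G.Adj x y → t s(x, y) ≠ .Pr)
    (hnodeg : ∀ x y, G.Adj x y → t s(x, y) = .U → ¬ (Ht G t).Reachable x y)
    {q₁ q₂ : V × Bool} (hr : (bbGraph G (Phi G t c) T).Reachable q₁ q₂) :
    (ccGraph (Gq G t) c (Tq G t T)).Reachable (cmk G t q₁.1, q₁.2) (cmk G t q₂.1, q₂.2) := by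
  refine reach_map (fun q => (cmk G t q.1, q.2)) ?_ hr
  rintro ⟨a1, a2⟩ ⟨b1, b2⟩ (⟨h1, h2, h3⟩ | ⟨h1, h2, h3⟩)
  · cases h1
    rcases hst : t s(a1, b1) with _ | _ | _ | _
    · -- Both: same component
      have heq : cmk G t a1 = cmk G t b1 :=
        SimpleGraph.ConnectedComponent.connectedComponentMk_eq_of_adj ⟨h2, hst⟩
      show (ccGraph (Gq G t) c (Tq G t T)).Reachable (cmk G t a1, a2) (cmk G t b1, a2)
      rw [heq]
    · -- Neither: impossible
      rw [Phi_N G h2 hst] at h3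
      exact absurd h3 (by simp)
    · -- Uniform : a cc-edge
      rw [Phi_U G h2 hst] at h3
      have hcol : c s(cmk G t a1, cmk G t b1) = a2 := (beq_iff_eq.mp h3).symm
      refine (SimpleGraph.Adj.reachable ?_)
      exact Or.inl ⟨rfl, ⟨fun hc => hnodeg a1 b1 h2 hst ((cmk_eq_iff G t).mp hc),
        a1, b1, h2, hst, rfl, rfl⟩, hcol⟩
    · exact absurd hst (hnoP a1 b1 h2)
  · cases h1
    exact (SimpleGraph.Adj.reachable (Or.inr ⟨rfl, h2, ⟨a1, rfl, h3⟩⟩))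

/-- Backward direction of the contraction correspondence. -/
lemma contr_bwd {t : Sym2 V → St} {T : Set V} {c : Sym2 (CW G t) → Bool}
    {A B : (CW G t) × Bool} (hr : (ccGraph (Gq G t) c (Tq G t T)).Reachable A B) :
    ∀ x y : V, cmk G t x = A.1 → cmk G t y = B.1 →
      (bbGraph G (Phi G t c) T).Reachable (x, A.2) (y, B.2) := by
  obtain ⟨w⟩ := hr
  induction w with
  | nil =>
    intro x y hx hy
    exact reach_layer G (Phi_match G t c) ((cmk_eq_iff G t).mp (hx.trans hy.symm)) _
  | @cons A C B hadj w ih =>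
    intro x y hx hy
    rcases hadj with ⟨h1, ⟨hne, x', y', hxy', hU', hx', hy'⟩, hc⟩ | ⟨h1, h2, h3⟩
    · rw [h1]
      have r1 : (bbGraph G (Phi G t c) T).Reachable (x, C.2) (x', C.2) :=
        reach_layer G (Phi_match G t c) ((cmk_eq_iff G t).mp (hx.trans hx'.symm)) _
      have r2 : (bbGraph G (Phi G t c) T).Adj (x', C.2) (y', C.2) := by
        refine bb_adj_h C.2 hxy' ?_
        rw [Phi_U G hxy' hU', hx', hy', hc, ← h1]
        simp
      have r3 := ih y' y hy' hy
      exact (r1.trans r2.reachable).trans r3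
    · obtain ⟨x'', hx'', hxT⟩ := h3
      have r1 : (bbGraph G (Phi G t c) T).Reachable (x, A.2) (x'', A.2) :=
        reach_layer G (Phi_match G t c) ((cmk_eq_iff G t).mp (hx.trans hx''.symm)) _
      have r2 : (bbGraph G (Phi G t c) T).Adj (x'', A.2) (x'', C.2) := bb_adj_v hxT h2
      have r3 := ih x'' y (by rw [hx'', h1]) hy
      exact (r1.trans r2.reachable).trans r3

lemma bb_congr {σ₁ σ₂ : Sym2 V → A} (T : Set V)
    (hag : ∀ x y, G.Adj x y → σ₁ s(x, y) = σ₂ s(x, y)) :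
    bbGraph G σ₁ T = bbGraph G σ₂ T := by
  ext a b
  show (_ ∨ _) ↔ (_ ∨ _)
  constructor
  · rintro (⟨h1, h2, h3⟩ | hv)
    · exact Or.inl ⟨h1, h2, by rw [← hag _ _ h2]; exact h3⟩
    · exact Or.inr hv
  · rintro (⟨h1, h2, h3⟩ | hv)
    · exact Or.inl ⟨h1, h2, by rw [hag _ _ h2]; exact h3⟩
    · exact Or.inr hv

/-- The base case: statuses in `{B, N, U}`, no degenerate and no parallel `U` edges. -/
lemma step_base {p : Sym2 V → ℝ} {t : Sym2 V → St} (T : Set V) (u v : V)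
    (h3 : ∀ (T' : Set (CW G t)) (u' v' : CW G t),
        PE3 (Gq G t) T' (u', false) (v', false) ≥ PE3 (Gq G t) T' (u', false) (v', true))
    (hnoP : ∀ x y, G.Adj x y → t s(x, y) ≠ .Pr)
    (hnodeg : ∀ x y, G.Adj x y → t s(x, y) = .U → ¬ (Ht G t).Reachable x y)
    (hnopar : ∀ x₀ y₀ x₁ y₁, G.Adj x₀ y₀ → G.Adj x₁ y₁ → t s(x₀, y₀) = .U →
      t s(x₁, y₁) = .U → s(x₀, y₀) ≠ s(x₁, y₁) →
      ¬ ((Ht G t).Reachable x₀ x₁ ∧ (Ht G t).Reachable y₀ y₁)) :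
    SS G p t (fun σ => pInd ((bbGraph G σ T).Reachable (u, false) (v, true)))
      ≤ SS G p t (fun σ => pInd ((bbGraph G σ T).Reachable (u, false) (v, false))) := by
  classical
  set P : Sym2 V → Prop := fun e => e ∈ G.edgeSet ∧ t e = .U with hPdef
  set g : Bool → (Sym2 V → A) → ℝ :=
    fun j σ => pInd ((bbGraph G σ T).Reachable (u, false) (v, j)) with hgdef
  -- injectivity of the induced map on uniform edges
  have hinj : ∀ e f : Sym2 V, P e → P f →
      Sym2.map (cmk G t) e = Sym2.map (cmk G t) f → e = f := by
    intro e f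
    induction e using Sym2.ind with | _ x0 y0 =>
    induction f using Sym2.ind with | _ x1 y1 =>
    intro hPe hPf hmap
    rw [Sym2.map_pair_eq, Sym2.map_pair_eq] at hmap
    by_contra hne
    have hadj0 : G.Adj x0 y0 := (SimpleGraph.mem_edgeSet G).mp hPe.1
    have hadj1 : G.Adj x1 y1 := (SimpleGraph.mem_edgeSet G).mp hPf.1
    rcases Sym2.eq_iff.mp hmap with ⟨h1, h2⟩ | ⟨h1, h2⟩
    · exact hnopar x0 y0 x1 y1 hadj0 hadj1 hPe.2 hPf.2 hne
        ⟨(cmk_eq_iff G t).mp h1, (cmk_eq_iff G t).mp h2⟩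
    · refine hnopar x0 y0 y1 x1 hadj0 hadj1.symm hPe.2
        (by rw [show s(y1, x1) = s(x1, y1) from Sym2.eq_swap]; exact hPf.2)
        (by rw [show s(y1, x1) = s(x1, y1) from Sym2.eq_swap]; exact hne)
        ⟨(cmk_eq_iff G t).mp h1, (cmk_eq_iff G t).mp h2⟩
  set jm : {e : Sym2 V // P e} → Sym2 (CW G t) := fun x => Sym2.map (cmk G t) x.1 with hjmdef
  have hjm : Function.Injective jm := fun x y hxy => Subtype.ext (hinj _ _ x.2 y.2 hxy)
  set Psi : ({e : Sym2 V // P e} → Bool) → Sym2 (CW G t) → Bool :=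
    fun b E' => if h : ∃ x, jm x = E' then b h.choose else false with hPsidef
  have hPsi : ∀ b x, Psi b (jm x) = b x := by
    intro b x
    have hex : ∃ x', jm x' = jm x := ⟨x, rfl⟩
    show (if h : ∃ x', jm x' = jm x then b h.choose else false) = b x
    rw [dif_pos hex]
    exact congrArg b (hjm hex.choose_spec)
  set σf : ({e : Sym2 V // P e} → A) → Sym2 V → A := fun f e =>
    if h : P e then f ⟨e, h⟩ else
      (if e ∈ G.edgeSet ∧ t e = .B then (fun _ => true) else fun _ => false) with hσfdef
  -- support forces the non-P coordinates
  have hNsup : ∀ (ρ : {e : Sym2 V // ¬ P e} → A),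
      (∏ e ∈ (EF G).subtype (fun e => ¬ P e), wOf p t e.1 (ρ e)) ≠ 0 →
      ∀ x y (hxy : G.Adj x y) (hnp : ¬ P s(x, y)),
        ρ ⟨s(x, y), hnp⟩ =
          (if s(x, y) ∈ G.edgeSet ∧ t s(x, y) = .B then (fun _ => true) else fun _ => false) := by
    intro ρ hρ x y hxy hnp
    have hmem : (⟨s(x, y), hnp⟩ : {e : Sym2 V // ¬ P e}) ∈
        (EF G).subtype (fun e => ¬ P e) :=
      Finset.mem_subtype.mpr ((mem_EF G).mpr hxy)
    have hfac : wSt (p s(x, y)) (t s(x, y)) (ρ ⟨s(x, y), hnp⟩) ≠ 0 :=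
      Finset.prod_ne_zero_iff.mp hρ _ hmem
    rcases hst : t s(x, y) with _ | _ | _ | _
    all_goals rw [hst] at hfac
    · rw [if_pos ⟨(SimpleGraph.mem_edgeSet G).mpr hxy, rfl⟩]
      exact wB_support hfac
    · rw [if_neg (fun hc => St.noConfusion hc.2)]
      exact wN_support hfac
    · exact absurd ⟨(SimpleGraph.mem_edgeSet G).mpr hxy, hst⟩ hnp
    · exact absurd hst (hnoP x y hxy)
  have hsub : (EF G).subtype P = (Finset.univ : Finset {e : Sym2 V // P e}) := by
    ext x
    simp only [Finset.mem_subtype, Finset.mem_univ, iff_true]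
    exact (mem_EF' G).mpr x.2.1
  set cst4 : ℝ := (4 : ℝ) ^ (Fintype.card {e : Sym2 V // ¬ P e}
      - ((EF G).subtype (fun e => ¬ P e)).card) with hcst4def
  set cu : ℕ := Fintype.card {e : Sym2 V // P e} with hcudef
  set Δ' : Bool → (Sym2 (CW G t) → Bool) → ℝ := fun j c =>
    pInd ((ccGraph (Gq G t) c (Tq G t T)).Reachable (cmk G t u, false) (cmk G t v, j))
    with hΔ'def
  have hmain : ∀ j : Bool, SS G p t (g j)
      = ((1 : ℝ)/2) ^ cu * (cst4 * ∑ b : {e : Sym2 V // P e} → Bool, Δ' j (Psi b)) := by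
    intro j
    show GS (EF G) (wOf p t) (g j) = _
    rw [GS_splitP P (EF G) (wOf p t) (g j), hsub]
    have hin : ∀ f : {e : Sym2 V // P e} → A,
        GS ((EF G).subtype (fun e => ¬ P e)) (fun e => wOf p t e.1)
          (fun ρ => g j (fun x => if h : P x then f ⟨x, h⟩ else ρ ⟨x, h⟩))
        = cst4 * g j (σf f) := by
      intro f
      have hcongr := GS_congr ((EF G).subtype (fun e => ¬ P e)) (fun e => wOf p t e.1)
        (fun ρ => g j (fun x => if h : P x then f ⟨x, h⟩ else ρ ⟨x, h⟩))
        (fun _ => g j (σf f)) ?_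
      · rw [hcongr, GS_const _ _ ?_ (g j (σf f))]
        intro e he
        have hne : t e.1 ≠ .Pr := by
          have hE : e.1 ∈ G.edgeSet := (mem_EF' G).mp (Finset.mem_subtype.mp he)
          revert hE
          induction e.1 using Sym2.ind with | _ x y =>
          intro hE
          exact hnoP x y ((SimpleGraph.mem_edgeSet G).mp hE)
        exact wSt_sum_one (p e.1) (t e.1) hne
      · intro ρ hρ
        have hgr : bbGraph G (fun x => if h : P x then f ⟨x, h⟩ else ρ ⟨x, h⟩) T
            = bbGraph G (σf f) T := by
          refine bb_congr G T fun x y hxy => ?_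
          by_cases hP : P s(x, y)
          · show (if h : P s(x, y) then f ⟨s(x, y), h⟩ else ρ ⟨s(x, y), h⟩)
              = (if h : P s(x, y) then f ⟨s(x, y), h⟩ else
                (if s(x, y) ∈ G.edgeSet ∧ t s(x, y) = St.B then (fun _ => true)
                  else fun _ => false))
            rw [dif_pos hP, dif_pos hP]
          · show (if h : P s(x, y) then f ⟨s(x, y), h⟩ else ρ ⟨s(x, y), h⟩)
              = (if h : P s(x, y) then f ⟨s(x, y), h⟩ else
                (if s(x, y) ∈ G.edgeSet ∧ t s(x, y) = St.B then (fun _ => true)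
                  else fun _ => false))
            rw [dif_neg hP, dif_neg hP]
            exact hNsup ρ hρ x y hxy hP
        show pInd ((bbGraph G (fun x => if h : P x then f ⟨x, h⟩ else ρ ⟨x, h⟩)
            T).Reachable (u, false) (v, j))
          = pInd ((bbGraph G (σf f) T).Reachable (u, false) (v, j))
        rw [hgr]
    have hstep1 : (∑ f : {e : Sym2 V // P e} → A,
        (∏ i : {e : Sym2 V // P e}, wOf p t i.1 (f i)) *
          GS ((EF G).subtype (fun e => ¬ P e)) (fun e => wOf p t e.1)
            (fun ρ => g j (fun x => if h : P x then f ⟨x, h⟩ else ρ ⟨x, h⟩)))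
        = ∑ f : {e : Sym2 V // P e} → A,
          (∏ i : {e : Sym2 V // P e}, wOf p t i.1 (f i)) * (cst4 * g j (σf f)) :=
      Finset.sum_congr rfl fun f _ => by rw [hin f]
    rw [hstep1]
    -- restrict to colorings
    set J : ({e : Sym2 V // P e} → Bool) → ({e : Sym2 V // P e} → A) :=
      fun b x jj => jj == b x with hJdef
    have hJinj : ∀ b ∈ (Finset.univ : Finset ({e : Sym2 V // P e} → Bool)),
        ∀ b' ∈ Finset.univ, J b = J b' → b = b' := by
      intro b _ b' _ hbb
      funext x
      have := congrFun (congrFun hbb x) true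
      simpa [hJdef] using this
    have hJzero : ∀ f : {e : Sym2 V // P e} → A,
        f ∉ Finset.univ.image J → (∏ x : {e : Sym2 V // P e}, wOf p t x.1 (f x)) = 0 := by
      intro f hf
      by_cases hc : ∃ x, f x false = f x true
      · obtain ⟨x, hx⟩ := hc
        refine Finset.prod_eq_zero (Finset.mem_univ x) ?_
        show wSt (p x.1) (t x.1) (f x) = 0
        rw [x.2.2]
        show (if f x false = f x true then (0:ℝ) else 1/2) = 0
        rw [if_pos hx]
      · push_neg at hc
        exfalso
        refine hf (Finset.mem_image.mpr ⟨fun x => f x true, Finset.mem_univ _, ?_⟩)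
        funext x jj
        show (jj == f x true) = f x jj
        have := hc x
        cases hft : f x true <;> cases hff : f x false <;>
          rw [hft, hff] at this <;> cases jj <;> simp [hft, hff] at this ⊢
    have himage : (∑ f : {e : Sym2 V // P e} → A,
          (∏ i : {e : Sym2 V // P e}, wOf p t i.1 (f i)) * (cst4 * g j (σf f)))
        = ∑ b : {e : Sym2 V // P e} → Bool,
          (∏ i : {e : Sym2 V // P e}, wOf p t i.1 (J b i)) * (cst4 * g j (σf (J b))) := by
      have h1 : (∑ f ∈ Finset.univ.image J,
            (∏ i : {e : Sym2 V // P e}, wOf p t i.1 (f i)) * (cst4 * g j (σf f)))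
          = ∑ b : {e : Sym2 V // P e} → Bool,
            (∏ i : {e : Sym2 V // P e}, wOf p t i.1 (J b i)) * (cst4 * g j (σf (J b))) :=
        Finset.sum_image hJinj
      rw [← h1]
      refine (Finset.sum_subset (Finset.subset_univ _) fun f _ hfn => ?_).symm
      rw [hJzero f hfn, zero_mul]
    rw [himage]
    have hJprod : ∀ b, (∏ i : {e : Sym2 V // P e}, wOf p t i.1 (J b i))
        = ((1:ℝ)/2) ^ cu := by
      intro b
      have : ∀ i : {e : Sym2 V // P e}, wOf p t i.1 (J b i) = 1/2 := by
        intro i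
        show wSt (p i.1) (t i.1) (J b i) = 1/2
        rw [i.2.2]
        show (if (J b i) false = (J b i) true then (0:ℝ) else 1/2) = 1/2
        rw [if_neg ?_]
        cases hbx : b i <;> simp [hJdef, hbx]
      rw [Finset.prod_congr rfl (fun i _ => this i), Finset.prod_const, Finset.card_univ,
        hcudef]
    have hσfJ : ∀ b, σf (J b) = Phi G t (Psi b) := by
      intro b
      funext e
      by_cases hP : P e
      · rw [hσfdef]
        show (if h : P e then J b ⟨e, h⟩ else _) = Phi G t (Psi b) e
        rw [dif_pos hP]
        unfold Phi
        rw [if_neg (fun hc => by rw [hP.2] at hc; exact St.noConfusion hc.2), if_pos hP]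
        have : Psi b (Sym2.map (cmk G t) e) = b ⟨e, hP⟩ := hPsi b ⟨e, hP⟩
        rw [this]
      · rw [hσfdef]
        show (if h : P e then J b ⟨e, h⟩ else
          (if e ∈ G.edgeSet ∧ t e = .B then (fun _ => true) else fun _ => false))
          = Phi G t (Psi b) e
        rw [dif_neg hP]
        unfold Phi
        by_cases hB : e ∈ G.edgeSet ∧ t e = .B
        · rw [if_pos hB, if_pos hB]
        · rw [if_neg hB, if_neg hB, if_neg hP]
    have hcontr : ∀ b, g j (σf (J b)) = Δ' j (Psi b) := by
      intro b
      rw [hσfJ b, hgdef, hΔ'def]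
      refine pInd_congr ⟨fun hr => contr_fwd G hnoP hnodeg hr,
        fun hr => contr_bwd G hr u v rfl rfl⟩
    have hlast : (∑ b : {e : Sym2 V // P e} → Bool,
          (∏ i : {e : Sym2 V // P e}, wOf p t i.1 (J b i)) * (cst4 * g j (σf (J b))))
        = ∑ b : {e : Sym2 V // P e} → Bool, ((1:ℝ)/2) ^ cu * (cst4 * Δ' j (Psi b)) :=
      Finset.sum_congr rfl fun b _ => by rw [hJprod b, hcontr b]
    rw [hlast, ← Finset.mul_sum, ← Finset.mul_sum]
  -- compare with the E3 probabilities on the quotient graph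
  have hccgr : ∀ c c' : Sym2 (CW G t) → Bool,
      (∀ x : {e : Sym2 V // P e}, c (jm x) = c' (jm x)) →
      ccGraph (Gq G t) c (Tq G t T) = ccGraph (Gq G t) c' (Tq G t T) := by
    intro c c' hcc
    have key : ∀ A1 B1 : CW G t, (Gq G t).Adj A1 B1 → c s(A1, B1) = c' s(A1, B1) := by
      rintro A1 B1 ⟨hne, x, y, hxy, hU, hx, hy⟩
      have he : s(A1, B1) = jm ⟨s(x, y), ⟨(SimpleGraph.mem_edgeSet G).mpr hxy, hU⟩⟩ := by
        show s(A1, B1) = Sym2.map (cmk G t) s(x, y)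
        rw [Sym2.map_pair_eq, hx, hy]
      rw [he, hcc]
    ext a b
    show (_ ∨ _) ↔ (_ ∨ _)
    constructor
    · rintro (⟨h1, hadj, hc⟩ | hv)
      · exact Or.inl ⟨h1, hadj, by rw [← key _ _ hadj]; exact hc⟩
      · exact Or.inr hv
    · rintro (⟨h1, hadj, hc⟩ | hv)
      · exact Or.inl ⟨h1, hadj, by rw [key _ _ hadj]; exact hc⟩
      · exact Or.inr hv
  have hsumc : ∀ jj : Bool, (∑ c : Sym2 (CW G t) → Bool, Δ' jj c)
      = (2:ℝ) ^ (Fintype.card {x : Sym2 (CW G t) // x ∉ Set.range jm}) *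
        ∑ b : {e : Sym2 V // P e} → Bool, Δ' jj (Psi b) := by
    intro jj
    rw [← sum_comp_inj jm hjm (fun b => Δ' jj (Psi b))]
    refine Finset.sum_congr rfl fun c _ => ?_
    have : ccGraph (Gq G t) c (Tq G t T) = ccGraph (Gq G t) (Psi (c ∘ jm)) (Tq G t T) := by
      refine hccgr _ _ fun x => ?_
      rw [hPsi]
      rfl
    rw [hΔ'def]
    show pInd _ = pInd _
    rw [this]
  -- apply the E3 inequality
  have hPE3 := h3 (Tq G t T) (cmk G t u) (cmk G t v)
  have hPE3' : ∀ jj : Bool, PE3 (Gq G t) (Tq G t T) (cmk G t u, false) (cmk G t v, jj)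
      = (∑ c : Sym2 (CW G t) → Bool, Δ' jj c) / 2 ^ (Fintype.card (Sym2 (CW G t))) := by
    intro jj
    rfl
  have h2K : (0:ℝ) < 2 ^ (Fintype.card (Sym2 (CW G t))) := by positivity
  have hC : (∑ c : Sym2 (CW G t) → Bool, Δ' true c)
      ≤ ∑ c : Sym2 (CW G t) → Bool, Δ' false c := by
    rw [ge_iff_le, hPE3' true, hPE3' false] at hPE3
    have h' := (div_le_div_iff₀ h2K h2K).mp hPE3
    exact le_of_mul_le_mul_right h' h2K
  have h2R : (0:ℝ) < (2:ℝ) ^ (Fintype.card {x : Sym2 (CW G t) // x ∉ Set.range jm}) := by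
    positivity
  have hB : (∑ b : {e : Sym2 V // P e} → Bool, Δ' true (Psi b))
      ≤ ∑ b : {e : Sym2 V // P e} → Bool, Δ' false (Psi b) := by
    rw [hsumc true, hsumc false] at hC
    exact le_of_mul_le_mul_left hC h2R
  have hfin := hmain true
  have hfin' := hmain false
  rw [hgdef] at hfin hfin'
  rw [hfin, hfin']
  refine mul_le_mul_of_nonneg_left ?_ (by positivity)
  exact mul_le_mul_of_nonneg_left hB (by positivity)

/-! ### The measure and the main induction -/

def cst : St → ℕ
  | .Pr => 2
  | .U => 1
  | _ => 0

def μm (t : Sym2 V → St) : ℕ := ∑ e ∈ EF G, cst (t e)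

lemma mu_update (t : Sym2 V → St) (e₀ : Sym2 V) (he : e₀ ∈ EF G) (s : St) :
    μm G (Function.update t e₀ s) + cst (t e₀) = μm G t + cst s := by
  unfold μm
  rw [← Finset.add_sum_erase _ (fun e => cst (Function.update t e₀ s e)) he,
    ← Finset.add_sum_erase _ (fun e => cst (t e)) he]
  rw [Function.update_self]
  have hrest : (∑ e ∈ (EF G).erase e₀, cst (Function.update t e₀ s e))
      = ∑ e ∈ (EF G).erase e₀, cst (t e) :=
    Finset.sum_congr rfl fun e he' => by rw [Function.update_of_ne (Finset.ne_of_mem_erase he')]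
  rw [hrest]
  omega

lemma key (p : Sym2 V → ℝ) (hp : ∀ e, 0 ≤ p e ∧ p e ≤ 1) (T : Set V) (u v : V)
    (hPE3 : ∀ t : Sym2 V → St, ∀ (T' : Set (CW G t)) (u' v' : CW G t),
      PE3 (Gq G t) T' (u', false) (v', false) ≥ PE3 (Gq G t) T' (u', false) (v', true)) :
    ∀ (n : ℕ) (t : Sym2 V → St), μm G t = n →
      SS G p t (fun σ => pInd ((bbGraph G σ T).Reachable (u, false) (v, true)))
        ≤ SS G p t (fun σ => pInd ((bbGraph G σ T).Reachable (u, false) (v, false))) := by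
  intro n
  induction n using Nat.strong_induction_on with
  | _ n ih =>
  intro t hn
  by_cases hPP : ∃ x y, G.Adj x y ∧ t s(x, y) = .Pr
  · obtain ⟨x₀, y₀, hxy, ht⟩ := hPP
    have he₀ : s(x₀, y₀) ∈ EF G := (mem_EF G).mpr hxy
    rw [step_P G _ x₀ y₀ hxy ht, step_P G _ x₀ y₀ hxy ht]
    have harith : ∀ s : St, μm G (Function.update t s(x₀, y₀) s) + cst (t s(x₀, y₀))
        = μm G t + cst s := fun s => mu_update G t s(x₀, y₀) he₀ s
    have hmB := harith .B
    have hmN := harith .N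
    have hmU := harith .U
    rw [ht] at hmB hmN hmU
    simp only [cst] at hmB hmN hmU
    have hB := ih (μm G (Function.update t s(x₀, y₀) .B)) (by omega) _ rfl
    have hN := ih (μm G (Function.update t s(x₀, y₀) .N)) (by omega) _ rfl
    have hU := ih (μm G (Function.update t s(x₀, y₀) .U)) (by omega) _ rfl
    have hp0 := (hp s(x₀, y₀)).1
    have hp1 := (hp s(x₀, y₀)).2
    refine add_le_add (add_le_add ?_ ?_) ?_
    · exact mul_le_mul_of_nonneg_left hB (sq_nonneg _)
    · exact mul_le_mul_of_nonneg_left hN (sq_nonneg _)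
    · refine mul_le_mul_of_nonneg_left hU ?_
      have : 0 ≤ 1 - p s(x₀, y₀) := by linarith
      nlinarith
  · by_cases hD : ∃ x y, G.Adj x y ∧ t s(x, y) = .U ∧ (Ht G t).Reachable x y
    · obtain ⟨x₀, y₀, hxy, ht, hR⟩ := hD
      have he₀ : s(x₀, y₀) ∈ EF G := (mem_EF G).mpr hxy
      rw [step_degen G T _ _ x₀ y₀ hxy ht hR, step_degen G T _ _ x₀ y₀ hxy ht hR]
      have hm := mu_update G t s(x₀, y₀) he₀ .N
      rw [ht] at hm
      simp only [cst] at hm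
      exact ih (μm G (Function.update t s(x₀, y₀) .N)) (by omega) _ rfl
    · by_cases hPar : ∃ x₀ y₀ x₁ y₁, G.Adj x₀ y₀ ∧ G.Adj x₁ y₁ ∧ t s(x₀, y₀) = .U ∧
          t s(x₁, y₁) = .U ∧ s(x₀, y₀) ≠ s(x₁, y₁) ∧
          (Ht G t).Reachable x₀ x₁ ∧ (Ht G t).Reachable y₀ y₁
      · obtain ⟨x₀, y₀, x₁, y₁, hxy0, hxy1, ht0, ht1, hnee, hRx, hRy⟩ := hPar
        have he₀ : s(x₀, y₀) ∈ EF G := (mem_EF G).mpr hxy0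
        have he₁ : s(x₁, y₁) ∈ EF G := (mem_EF G).mpr hxy1
        rw [step_parallel G T _ _ x₀ y₀ x₁ y₁ hxy0 hxy1 ht0 ht1 hnee hRx hRy,
          step_parallel G T _ _ x₀ y₀ x₁ y₁ hxy0 hxy1 ht0 ht1 hnee hRx hRy]
        have hm1 := mu_update G t s(x₁, y₁) he₁ .N
        rw [ht1] at hm1
        simp only [cst] at hm1
        have hm2 := mu_update G (Function.update t s(x₁, y₁) .N) s(x₀, y₀) he₀ .B
        rw [Function.update_of_ne hnee, ht0] at hm2
        simp only [cst] at hm2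
        have h1 := ih (μm G (Function.update t s(x₁, y₁) .N)) (by omega) _ rfl
        have h2 := ih (μm G (Function.update (Function.update t s(x₁, y₁) .N) s(x₀, y₀) .B))
          (by omega) _ rfl
        have half : (0:ℝ) ≤ 1/2 := by norm_num
        exact add_le_add (mul_le_mul_of_nonneg_left h1 half)
          (mul_le_mul_of_nonneg_left h2 half)
      · refine step_base G T u v (hPE3 t) ?_ ?_ ?_
        · exact fun x y hxy hc => hPP ⟨x, y, hxy, hc⟩
        · exact fun x y hxy hc hr => hD ⟨x, y, hxy, hc, hr⟩
        · exact fun x₀ y₀ x₁ y₁ h1 h2 h3 h4 h5 h6 =>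
            hPar ⟨x₀, y₀, x₁, y₁, h1, h2, h3, h4, h5, h6.1, h6.2⟩

/-! ### Reduction of PE2 and PE1 to the status model -/

lemma PE2_eq (p : Sym2 V → ℝ) (T : Set V) (x y : V × Bool) :
    PE2 G p T x y
      = ((1:ℝ)/4) ^ ((Finset.univ.filter (fun e : Sym2 V => e ∉ G.edgeSet)).card) *
        SS G p (fun _ => St.Pr) (fun σ => pInd ((bbGraph G σ T).Reachable x y)) := by
  unfold PE2 SS GS
  rw [Finset.mul_sum]
  refine Finset.sum_congr rfl fun σ _ => ?_
  have hw : wE2 G p σ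
      = ((1:ℝ)/4) ^ ((Finset.univ.filter (fun e : Sym2 V => e ∉ G.edgeSet)).card) *
        ∏ e ∈ EF G, wOf p (fun _ => St.Pr) e (σ e) := by
    unfold wE2
    have h1 : ∀ e : Sym2 V, (∏ b : Bool,
        if e ∈ G.edgeSet then (if σ e b then p e else 1 - p e) else 1/2)
        = if e ∈ G.edgeSet then wOf p (fun _ => St.Pr) e (σ e) else 1/4 := by
      intro e
      by_cases he : e ∈ G.edgeSet
      · simp only [he, if_true]
        rw [Fintype.prod_bool]
        show _ = wSt (p e) St.Pr (σ e)
        show _ = (if σ e false then p e else 1 - p e) * (if σ e true then p e else 1 - p e)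
        ring
      · simp only [he, if_false]
        rw [Fintype.prod_bool]
        norm_num
    rw [Finset.prod_congr rfl fun e _ => h1 e]
    rw [Finset.prod_ite]
    rw [Finset.prod_const]
    have : (Finset.filter (fun e : Sym2 V => e ∈ G.edgeSet) Finset.univ) = EF G := rfl
    rw [this]
    ring
  rw [hw]
  ring

end Model





end BBAux

/-- If the bunkbed inequality in model E₃ holds for every minor of `G` (and every set
of transversal vertices), then the bunkbed inequality in model E₂ holds for `G` for
every probability vector and every `T`, and the bunkbed inequality in model E₁ holds
for `G` for every `p ∈ [0,1]`. -/
theorem bunkbed_E3_minors_implies_E2_and_E1 [Fintype V] [DecidableEq V]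
    (G : SimpleGraph V) (hconn : G.Connected)
    (h : ∀ (W : Type) (_ : Fintype W) (_ : DecidableEq W) (G' : SimpleGraph W),
      IsMinor G' G → ∀ (T' : Set W) (u v : W),
        PE3 G' T' (u, false) (v, false) ≥ PE3 G' T' (u, false) (v, true)) :
    (∀ (p : Sym2 V → ℝ), (∀ e, 0 ≤ p e ∧ p e ≤ 1) → ∀ (T : Set V) (u v : V),
      PE2 G p T (u, false) (v, false) ≥ PE2 G p T (u, false) (v, true)) ∧
    (∀ p : ℝ, 0 ≤ p → p ≤ 1 → ∀ u v : V,
      PE1 G p (u, false) (v, false) ≥ PE1 G p (u, false) (v, true)) := by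
  have part1 : ∀ (p : Sym2 V → ℝ), (∀ e, 0 ≤ p e ∧ p e ≤ 1) → ∀ (T : Set V) (u v : V),
      PE2 G p T (u, false) (v, false) ≥ PE2 G p T (u, false) (v, true) := by
    intro p hp T u v
    rw [ge_iff_le, BBAux.PE2_eq, BBAux.PE2_eq]
    refine mul_le_mul_of_nonneg_left ?_ (by positivity)
    refine BBAux.key G p hp T u v ?_ (BBAux.μm G (fun _ => BBAux.St.Pr)) _ rfl
    intro t T' u' v'
    exact h (BBAux.CW G t) inferInstance inferInstance (BBAux.Gq G t)
      (BBAux.Gq_isMinor G t) T' u' v'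
  refine ⟨part1, ?_⟩
  intro p hp0 hp1 u v
  rw [ge_iff_le]
  unfold PE1
  have hcomm : ∀ j : Bool, (∑ σ : Sym2 V → Bool → Bool, ∑ η : V → Bool,
      wE2 G (fun _ => p) σ * (∏ w : V, if η w then p else 1 - p) *
        pInd ((bbGraph G σ {w | η w = true}).Reachable (u, false) (v, j)))
      = ∑ η : V → Bool, ∑ σ : Sym2 V → Bool → Bool,
      wE2 G (fun _ => p) σ * (∏ w : V, if η w then p else 1 - p) *
        pInd ((bbGraph G σ {w | η w = true}).Reachable (u, false) (v, j)) :=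
    fun j => Finset.sum_comm
  rw [hcomm true, hcomm false]
  refine Finset.sum_le_sum fun η _ => ?_
  have hQ : (0:ℝ) ≤ ∏ w : V, if η w then p else 1 - p :=
    Finset.prod_nonneg fun w _ => by split <;> linarith
  have hrw : ∀ j : Bool, (∑ σ : Sym2 V → Bool → Bool,
      wE2 G (fun _ => p) σ * (∏ w : V, if η w then p else 1 - p) *
        pInd ((bbGraph G σ {w | η w = true}).Reachable (u, false) (v, j)))
      = (∏ w : V, if η w then p else 1 - p) *
        PE2 G (fun _ => p) {w | η w = true} (u, false) (v, j) := by
    intro j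
    unfold PE2
    rw [Finset.mul_sum]
    exact Finset.sum_congr rfl fun σ _ => by ring
  rw [hrw true, hrw false]
  refine mul_le_mul_of_nonneg_left ?_ hQ
  exact part1 (fun _ => p) (fun _ => ⟨hp0, hp1⟩) {w | η w = true} u v

end
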